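/- Let a countable group Γ act continuously on a compact metrizable space X with the weak specification property. Then every tuple (x₁, …, x_k) ∈ X^k is an orbit IE-tuple; that is, for every product neighborhood U₁ × ⋯ × U_k of (x₁, …, x_k), the tuple (U₁, …, U_k) has positive independence density. -/
import Mathlib


open Filter Topology MeasureTheory
open scoped symmDiff

namespace GOE

/-- The action of `Γ` on `X` is continuous (each group element acts continuously). -/
def ContAction (Γ X : Type*) [Group Γ] [TopologicalSpace X] [MulAction Γ X] : Prop :=
  ∀ s : Γ, Continuous fun x : X => s • x

/-- The weak specification property with respect to the metric on `X`. -/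
def WeakSpec (Γ X : Type*) [Group Γ] [MetricSpace X] [MulAction Γ X] : Prop :=
  ∀ ε : ℝ, 0 < ε → ∃ F : Finset Γ, F.Nonempty ∧ (∀ s ∈ F, s⁻¹ ∈ F) ∧
    ∀ (J : Type) (_ : Fintype J) (Fj : J → Finset Γ),
      (∀ i j : J, i ≠ j → ∀ f ∈ F, ∀ s ∈ Fj i, f * s ∉ Fj j) →
      ∀ xj : J → X, ∃ x : X, ∀ j : J, ∀ s ∈ Fj j, dist (s • x) (s • xj j) ≤ ε

/-- Expansiveness of the action with respect to the metric on `X`. -/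
def Expansive (Γ X : Type*) [Group Γ] [MetricSpace X] [MulAction Γ X] : Prop :=
  ∃ κ : ℝ, 0 < κ ∧ ∀ x y : X, x ≠ y → ∃ s : Γ, κ < dist (s • x) (s • y)

/-- `(x, y)` is a homoclinic pair: `dist (s • x) (s • y) → 0` as `s → ∞` in `Γ`. -/
def Homoclinic (Γ : Type*) {X : Type*} [Group Γ] [MetricSpace X] [MulAction Γ X]
    (x y : X) : Prop :=
  ∀ ε : ℝ, 0 < ε → ∃ E : Finset Γ, ∀ s : Γ, s ∉ E → dist (s • x) (s • y) < ε

/-- `T` is pre-injective: injective on each homoclinic equivalence class. -/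
def PreInjective (Γ : Type*) {X Y : Type*} [Group Γ] [MetricSpace X] [MulAction Γ X]
    (T : X → Y) : Prop :=
  ∀ x y : X, Homoclinic Γ x y → T x = T y → x = y

/-- `F` is a left Følner sequence for `Γ`. -/
def IsFolner (Γ : Type*) [Group Γ] (F : ℕ → Finset Γ) : Prop :=
  letI := Classical.decEq Γ
  (∀ n, (F n).Nonempty) ∧
  ∀ K : Finset Γ, K.Nonempty →
    Tendsto (fun n =>
        ((((K.biUnion fun k => (F n).image fun t => k * t) ∆ (F n)).card : ℝ) / (F n).card))
      atTop (𝓝 0)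

/-- The minimal number of members of the cover `⋁_{s ∈ E} s⁻¹ U` needed to cover `Z`. -/
noncomputable def covNumOn (Γ X : Type*) [Group Γ] [TopologicalSpace X] [MulAction Γ X]
    (Z : Set X) (U : Finset (Set X)) (E : Finset Γ) : ℕ :=
  sInf {n : ℕ | ∃ c : Finset (Γ → Set X), c.card = n ∧ (∀ f ∈ c, ∀ s : Γ, f s ∈ U) ∧
    Z ⊆ ⋃ f ∈ c, ⋂ s ∈ E, (fun x : X => s • x) ⁻¹' f s}

/-- Topological entropy of the restriction of the action to the invariant set `Z`,
computed along the Følner sequence `F` via open covers. -/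
noncomputable def topEntOn (Γ X : Type*) [Group Γ] [TopologicalSpace X] [MulAction Γ X]
    (Z : Set X) (F : ℕ → Finset Γ) : EReal :=
  ⨆ (U : Finset (Set X)) (_ : (∀ V ∈ U, IsOpen V) ∧ Z ⊆ ⋃₀ (↑U : Set (Set X))),
    Filter.limsup
      (fun n => ((Real.log (covNumOn Γ X Z U (F n)) / (F n).card : ℝ) : EReal)) Filter.atTop

/-- Maximal cardinality of a `(ρ_E, ε)`-separated subset of `Z`. -/
noncomputable def sepNum (Γ X : Type*) [Group Γ] [MetricSpace X] [MulAction Γ X]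
    (Z : Set X) (E : Finset Γ) (ε : ℝ) : ℕ :=
  sSup {n : ℕ | ∃ W : Finset X, (↑W : Set X) ⊆ Z ∧ W.card = n ∧
    ∀ x ∈ W, ∀ y ∈ W, x ≠ y → ∃ s ∈ E, ε ≤ dist (s • x) (s • y)}

/-- Minimal cardinality of a `(ρ_E, ε)`-spanning subset of `Z`. -/
noncomputable def spnNum (Γ X : Type*) [Group Γ] [MetricSpace X] [MulAction Γ X]
    (Z : Set X) (E : Finset Γ) (ε : ℝ) : ℕ :=
  sInf {n : ℕ | ∃ W : Finset X, (↑W : Set X) ⊆ Z ∧ W.card = n ∧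
    ∀ x ∈ Z, ∃ w ∈ W, ∀ s ∈ E, dist (s • x) (s • w) < ε}

/-- Shannon entropy of a finite family of Borel sets. -/
noncomputable def shannonH {X : Type*} [MeasurableSpace X] (μ : Measure X)
    (P : Finset (Set X)) : ℝ :=
  ∑ A ∈ P, -((μ A).toReal * Real.log (μ A).toReal)

/-- The join `⋁_{s ∈ E} s⁻¹ P` of the partition `P`. -/
noncomputable def joinPart (Γ X : Type*) [Group Γ] [MulAction Γ X]
    (P : Finset (Set X)) (E : Finset Γ) : Finset (Set X) :=
  letI := Classical.decEq Γ
  letI := Classical.decEq (Set X)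
  (E.pi fun _ => P).image fun f => ⋂ s, ⋂ (h : s ∈ E), (fun x : X => s • x) ⁻¹' f s h

/-- Dynamical entropy of the partition `P` along the Følner sequence `F`. -/
noncomputable def dynEnt (Γ X : Type*) [Group Γ] [MulAction Γ X] [MeasurableSpace X]
    (μ : Measure X) (P : Finset (Set X)) (F : ℕ → Finset Γ) : ℝ :=
  Filter.limsup (fun n => shannonH μ (joinPart Γ X P (F n)) / (F n).card) Filter.atTop

/-- `P` is a finite Borel partition of `X`. -/
def IsBorelPartition {X : Type*} [MeasurableSpace X] (P : Finset (Set X)) : Prop :=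
  (∀ A ∈ P, MeasurableSet A) ∧ (∀ A ∈ P, ∀ B ∈ P, A ≠ B → Disjoint A B) ∧
    ⋃₀ (↑P : Set (Set X)) = Set.univ

/-- Completely positive entropy of `Γ ↷ (X, μ)` along the Følner sequence `F`. -/
def HasCPE (Γ X : Type*) [Group Γ] [MulAction Γ X] [MeasurableSpace X]
    (μ : Measure X) (F : ℕ → Finset Γ) : Prop :=
  ∀ P : Finset (Set X), IsBorelPartition P → 0 < shannonH μ P → 0 < dynEnt Γ X μ P F

/-- `K'` is an independence set for the tuple `D` of subsets of `X`. -/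
def IsIndepSet (Γ X : Type*) [Group Γ] [MulAction Γ X] {k : ℕ}
    (D : Fin k → Set X) (K' : Finset Γ) : Prop :=
  ∀ ω : Γ → Fin k, ∃ x : X, ∀ s ∈ K', s • x ∈ D (ω s)

/-- The independence density of the tuple `D`. -/
noncomputable def indepDensity (Γ X : Type*) [Group Γ] [MulAction Γ X] {k : ℕ}
    (D : Fin k → Set X) : ℝ :=
  sInf {r : ℝ | ∃ K : Finset Γ, K.Nonempty ∧
    r = ((sSup {n : ℕ | ∃ K' ⊆ K, K'.card = n ∧ IsIndepSet Γ X D K'} : ℕ) : ℝ) / K.card}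

/-- The shift action `(s • x)_t = x_{s⁻¹ t}` on `Γ → A`. -/
def shiftAct {Γ A : Type*} [Group Γ] (s : Γ) (x : Γ → A) : Γ → A := fun t => x (s⁻¹ * t)

end GOE

open GOE

open scoped Pointwise

/-- Every finite set `K` contains an `F`-separated subset `K'` such that
`(F ∪ {1}) K'` covers `K`. -/
private lemma exists_net {Γ : Type*} [Group Γ] [DecidableEq Γ] (F : Finset Γ)
    (hF : ∀ s ∈ F, s⁻¹ ∈ F) (K : Finset Γ) :
    ∃ K' ⊆ K,
      (∀ s ∈ K', ∀ t ∈ K', s ≠ t → t * s⁻¹ ∉ F) ∧ K ⊆ insert 1 F * K' := by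
  induction K using Finset.strongInduction with
  | _ K ih =>
    rcases K.eq_empty_or_nonempty with rfl | ⟨s, hs⟩
    · exact ⟨∅, Finset.Subset.refl _, by simp, by simp⟩
    · set B : Finset Γ := (insert 1 F).image (· * s) with hB
      have hsB : s ∈ B := by simp [hB]
      have hsubset : K \ B ⊂ K := by
        refine Finset.ssubset_iff_of_subset Finset.sdiff_subset |>.2 ⟨s, hs, ?_⟩
        simp [hsB]
      obtain ⟨K₀', hsub', hpair, hcov⟩ := ih (K \ B) hsubset
      refine ⟨insert s K₀', ?_, ?_, ?_⟩
      · exact Finset.insert_subset hs (hsub'.trans Finset.sdiff_subset)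
      · intro a ha b hb hab hmem
        rcases Finset.mem_insert.1 ha with ha' | ha' <;>
          rcases Finset.mem_insert.1 hb with hb' | hb'
        · exact hab (ha'.trans hb'.symm)
        · -- a = s, b ∈ K₀' : b * a⁻¹ ∈ F gives b ∈ B
          have hbK : b ∈ K \ B := hsub' hb'
          have : b ∈ B := by
            simp only [hB, Finset.mem_image]
            refine ⟨b * a⁻¹, Finset.mem_insert_of_mem hmem, ?_⟩
            rw [← ha']; group
          exact (Finset.mem_sdiff.1 hbK).2 this
        · -- b = s, a ∈ K₀'
          have haK : a ∈ K \ B := hsub' ha'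
          have h1 : a * b⁻¹ ∈ F := by
            have := hF _ hmem
            simpa using this
          have : a ∈ B := by
            simp only [hB, Finset.mem_image]
            refine ⟨a * b⁻¹, Finset.mem_insert_of_mem h1, ?_⟩
            rw [← hb']; group
          exact (Finset.mem_sdiff.1 haK).2 this
        · exact hpair a ha' b hb' hab hmem
      · intro t ht
        by_cases htB : t ∈ B
        · simp only [hB, Finset.mem_image] at htB
          obtain ⟨f, hf, rfl⟩ := htB
          exact Finset.mul_mem_mul hf (Finset.mem_insert_self s _)
        · have := hcov (Finset.mem_sdiff.2 ⟨ht, htB⟩)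
          obtain ⟨f, hf, u, hu, rfl⟩ := Finset.mem_mul.1 this
          exact Finset.mul_mem_mul hf (Finset.mem_insert_of_mem hu)

/-- for an action with weak specification, every tuple is an orbit
IE-tuple. -/
theorem weakSpec_every_tuple_IE {Γ X : Type*} [Group Γ] [Countable Γ]
    [MetricSpace X] [CompactSpace X] [MulAction Γ X]
    (hact : ContAction Γ X) (hws : WeakSpec Γ X)
    (k : ℕ) (x : Fin k → X) (U : Fin k → Set X) (hU : ∀ i, U i ∈ 𝓝 (x i)) :
    0 < indepDensity Γ X U := by
  classical
  -- Choose a uniform ε with closed balls inside the U i.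
  obtain ⟨ε, hε, hball⟩ : ∃ ε : ℝ, 0 < ε ∧ ∀ i, Metric.closedBall (x i) ε ⊆ U i := by
    rcases Nat.eq_zero_or_pos k with rfl | hk
    · exact ⟨1, one_pos, fun i => i.elim0⟩
    · have hch : ∀ i : Fin k, ∃ e : ℝ, 0 < e ∧ Metric.closedBall (x i) e ⊆ U i := by
        intro i
        rcases Metric.mem_nhds_iff.1 (hU i) with ⟨e, he, hsub⟩
        exact ⟨e / 2, by linarith,
          (Metric.closedBall_subset_ball (by linarith)).trans hsub⟩
      choose εf hεf hsubf using hch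
      refine ⟨Finset.univ.inf' ⟨⟨0, hk⟩, Finset.mem_univ _⟩ εf, ?_, ?_⟩
      · exact (Finset.lt_inf'_iff _).2 fun i _ => hεf i
      · intro i
        exact (Metric.closedBall_subset_closedBall
          (Finset.inf'_le _ (Finset.mem_univ i))).trans (hsubf i)
  obtain ⟨F, hFne, hFsymm, hspec⟩ := hws ε hε
  have hcpos : (0 : ℝ) < 1 / (F.card + 1) := by positivity
  have key : ∀ K : Finset Γ, K.Nonempty → ∃ K' ⊆ K, K'.Nonempty ∧ IsIndepSet Γ X U K' ∧
      (K.card : ℝ) ≤ (F.card + 1) * K'.card := by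
    intro K hK
    obtain ⟨K', hK'K, hpair, hcov⟩ := exists_net F hFsymm K
    have hK'ne : K'.Nonempty := by
      rcases K'.eq_empty_or_nonempty with rfl | h
      · rw [Finset.mul_empty] at hcov
        exact absurd (Finset.subset_empty.1 hcov) (Finset.nonempty_iff_ne_empty.1 hK)
      · exact h
    refine ⟨K', hK'K, hK'ne, ?_, ?_⟩
    · -- independence via weak specification
      intro ω
      set e := K'.equivFin.symm with he
      have hcond : ∀ i j : Fin K'.card, i ≠ j → ∀ f ∈ F,
          ∀ s ∈ ({(e i : Γ)} : Finset Γ), f * s ∉ ({(e j : Γ)} : Finset Γ) := by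
        intro i j hij f hf s hsmem hmem
        rw [Finset.mem_singleton] at hsmem hmem
        subst hsmem
        have hne : (e i : Γ) ≠ (e j : Γ) := by
          intro h
          exact hij (e.injective (Subtype.ext h))
        refine hpair _ (e i).2 _ (e j).2 hne ?_
        rw [← hmem]
        simpa using hf
      obtain ⟨y, hy⟩ := hspec (Fin K'.card) inferInstance (fun j => {(e j : Γ)}) hcond
        (fun j => (e j : Γ)⁻¹ • x (ω (e j)))
      refine ⟨y, fun s hsK' => ?_⟩
      have h1 := hy (K'.equivFin ⟨s, hsK'⟩)
      rw [show e (K'.equivFin ⟨s, hsK'⟩) = ⟨s, hsK'⟩ from K'.equivFin.symm_apply_apply _]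
        at h1
      have h2 := h1 s (Finset.mem_singleton_self s)
      simp only [smul_inv_smul] at h2
      exact hball (ω s) (Metric.mem_closedBall.2 h2)
    · -- cardinality estimate
      have h1 : K.card ≤ (insert 1 F).card * K'.card :=
        le_trans (Finset.card_le_card hcov) Finset.card_mul_le
      have h2 : (insert 1 F).card ≤ F.card + 1 := Finset.card_insert_le _ _
      calc (K.card : ℝ) ≤ ((insert 1 F).card : ℝ) * K'.card := by exact_mod_cast h1
        _ ≤ (F.card + 1) * K'.card := by
            have : ((insert 1 F).card : ℝ) ≤ (F.card : ℝ) + 1 := by exact_mod_cast h2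
            exact mul_le_mul_of_nonneg_right this (by positivity)
  refine lt_of_lt_of_le hcpos (le_csInf ?_ ?_)
  · exact ⟨_, ⟨{1}, Finset.singleton_nonempty 1, rfl⟩⟩
  · rintro r ⟨K, hKne, rfl⟩
    obtain ⟨K', hK'K, hK'ne, hindep, hcard⟩ := key K hKne
    have hmem : K'.card ∈ {n : ℕ | ∃ K'' ⊆ K, K''.card = n ∧ IsIndepSet Γ X U K''} :=
      ⟨K', hK'K, rfl, hindep⟩
    have hbdd : BddAbove {n : ℕ | ∃ K'' ⊆ K, K''.card = n ∧ IsIndepSet Γ X U K''} := by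
      refine ⟨K.card, ?_⟩
      rintro n ⟨K'', hK'', rfl, -⟩
      exact Finset.card_le_card hK''
    have hle : K'.card ≤ sSup {n : ℕ | ∃ K'' ⊆ K, K''.card = n ∧ IsIndepSet Γ X U K''} :=
      le_csSup hbdd hmem
    have hKpos : (0 : ℝ) < K.card := by exact_mod_cast Finset.card_pos.2 hKne
    rw [div_le_div_iff₀ (by positivity) hKpos]
    calc (1 : ℝ) * K.card = K.card := one_mul _
      _ ≤ (F.card + 1) * K'.card := hcard
      _ ≤ (F.card + 1) *
            ((sSup {n : ℕ | ∃ K'' ⊆ K, K''.card = n ∧ IsIndepSet Γ X U K''} : ℕ) : ℝ) := by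
          exact mul_le_mul_of_nonneg_left (by exact_mod_cast hle) (by positivity)
      _ = ((sSup {n : ℕ | ∃ K'' ⊆ K, K''.card = n ∧ IsIndepSet Γ X U K''} : ℕ) : ℝ) *
            (F.card + 1) := mul_comm _ _
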